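/- Let Q ∈ 𝒬_n, fix k ∈ {1,…,n}, and for a ∈ {0,1} let y*_a := min{f_Q(x) : x ∈ {0,1}^n, x_k = a}, with given real bounds y̌_a ≤ y*_a ≤ ŷ_a. Define y⁻ := min{0, ŷ_0 − y̌_1} and y⁺ := max{0, y̌_0 − ŷ_1}. Then for every w ∈ ℝ with y⁻ ≤ w ≤ y⁺, an optimum is preserved under the diagonal update Q_{kk} ↦ Q_{kk} + w: S*(Q) ∩ S*(Q + w·e_k e_kᵀ) ≠ ∅. -/

import Mathlib

open scoped BigOperators

/-- Real-valued version of a binary vector. -/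
def toR {n : ℕ} (x : Fin n → Bool) : Fin n → ℝ := fun i => if x i then 1 else 0

/-- QUBO energy f_Q(x) = xᵀQx (for upper-triangular Q this is Σ_{i≤j} Q i j * x i * x j). -/
def energy {n : ℕ} (Q : Matrix (Fin n) (Fin n) ℝ) (x : Fin n → Bool) : ℝ :=
  ∑ i, ∑ j, Q i j * toR x i * toR x j

/-- Upper-triangular predicate: entries below the diagonal vanish. -/
def IsUpperTri {n : ℕ} (Q : Matrix (Fin n) (Fin n) ℝ) : Prop :=
  ∀ i j : Fin n, j < i → Q i j = 0

/-- S*(Q): the set of minimizing binary vectors. -/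
def minimizers {n : ℕ} (Q : Matrix (Fin n) (Fin n) ℝ) : Set (Fin n → Bool) :=
  {x | ∀ y : Fin n → Bool, energy Q x ≤ energy Q y}

/-- y*_a: the minimum of f_Q over the subspace {x : x_k = a}. -/
noncomputable def subOpt1 {n : ℕ} (Q : Matrix (Fin n) (Fin n) ℝ) (k : Fin n)
    (a : Bool) : ℝ :=
  sInf (energy Q '' {x : Fin n → Bool | x k = a})

lemma energy_add_std {n : ℕ} (Q : Matrix (Fin n) (Fin n) ℝ) (k : Fin n) (w : ℝ)
    (x : Fin n → Bool) :
    energy (Q + Matrix.single k k w) x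
      = energy Q x + (if x k then w else 0) := by
  unfold energy
  have : ∀ i j, (Q + Matrix.single k k w) i j * toR x i * toR x j
      = Q i j * toR x i * toR x j
        + (if k = i ∧ k = j then w * toR x i * toR x j else 0) := by
    intro i j
    simp [Matrix.add_apply, Matrix.single, add_mul, ite_mul]
  simp only [this, Finset.sum_add_distrib]
  congr 1
  rw [Finset.sum_comm]
  simp only [← Finset.sum_product']
  rw [Finset.sum_eq_single (k, k)]
  · simp [toR]; cases h : x k <;> simp
  · intro b _ hb
    rcases b with ⟨i, j⟩
    simp only [ite_eq_right_iff]
    rintro ⟨rfl, rfl⟩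
    simp at hb
  · simp

lemma exists_sub_min {n : ℕ} (Q : Matrix (Fin n) (Fin n) ℝ) (k : Fin n) (a : Bool) :
    ∃ x : Fin n → Bool, x k = a ∧ energy Q x = subOpt1 Q k a ∧
      ∀ y : Fin n → Bool, y k = a → subOpt1 Q k a ≤ energy Q y := by
  set s := energy Q '' {x : Fin n → Bool | x k = a} with hs
  have hfin : s.Finite := (Set.toFinite _).image _
  have hne : s.Nonempty := ⟨energy Q (Function.update (fun _ => false) k a),
    ⟨_, by simp, rfl⟩⟩
  obtain ⟨x, hx, hxe⟩ := hne.csInf_mem hfin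
  exact ⟨x, hx, hxe, fun y hy => csInf_le hfin.bddBelow ⟨y, hy, rfl⟩⟩

/-- Optimum preservation under a diagonal parameter update Q_{kk} ↦ Q_{kk} + w,
whenever y⁻ ≤ w ≤ y⁺ with y⁻ = min{0, ŷ₀ − y̌₁} and y⁺ = max{0, y̌₀ − ŷ₁}. -/
theorem diagonal_update_preserves_optimum (n : ℕ) (hn : 1 ≤ n)
    (Q : Matrix (Fin n) (Fin n) ℝ) (hQ : IsUpperTri Q) (k : Fin n)
    (ylo yhi : Bool → ℝ)
    (hbounds : ∀ a : Bool, ylo a ≤ subOpt1 Q k a ∧ subOpt1 Q k a ≤ yhi a)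
    (w : ℝ)
    (hw_lo : min 0 (yhi false - ylo true) ≤ w)
    (hw_hi : w ≤ max 0 (ylo false - yhi true)) :
    (minimizers Q ∩ minimizers (Q + Matrix.single k k w)).Nonempty := by
  rcases lt_trichotomy w 0 with hw | hw | hw
  · -- w < 0 : use a minimizer with x k = false
    have hkey : yhi false - ylo true ≤ w := by
      rcases min_le_iff.mp hw_lo with h | h
      · linarith
      · exact h
    obtain ⟨x0, hx0k, hx0e, hx0min⟩ := exists_sub_min Q k false
    have h0lo := (hbounds false).1
    have h0hi := (hbounds false).2
    have h1lo := (hbounds true).1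
    obtain ⟨x1, hx1k, hx1e, hx1min⟩ := exists_sub_min Q k true
    refine ⟨x0, fun y => ?_, fun y => ?_⟩
    · cases hyk : y k
      · exact hx0e ▸ hx0min y hyk
      · have := hx1min y hyk
        rw [hx0e]; linarith
    · rw [energy_add_std, energy_add_std, hx0k, if_neg (by simp), add_zero]
      cases hyk : y k
      · rw [if_neg (by simp [hyk])]
        have := hx0min y hyk
        rw [hx0e]; linarith
      · rw [if_pos rfl]
        have := hx1min y hyk
        rw [hx0e]; linarith
  · -- w = 0
    subst hw
    obtain ⟨x, hx⟩ := Finite.exists_min (energy Q)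
    refine ⟨x, hx, fun y => ?_⟩
    rw [energy_add_std, energy_add_std]
    simp only [if_neg, ite_self]
    simpa using hx y
  · -- w > 0 : use a minimizer with x k = true
    have hkey : w ≤ ylo false - yhi true := by
      rcases le_max_iff.mp hw_hi with h | h
      · linarith
      · exact h
    obtain ⟨x1, hx1k, hx1e, hx1min⟩ := exists_sub_min Q k true
    have h1lo := (hbounds true).1
    have h1hi := (hbounds true).2
    have h0lo := (hbounds false).1
    obtain ⟨x0, hx0k, hx0e, hx0min⟩ := exists_sub_min Q k false
    refine ⟨x1, fun y => ?_, fun y => ?_⟩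
    · cases hyk : y k
      · have := hx0min y hyk
        rw [hx1e]; linarith
      · exact hx1e ▸ hx1min y hyk
    · rw [energy_add_std, energy_add_std, hx1k, if_pos rfl]
      cases hyk : y k
      · rw [if_neg (by simp [hyk])]
        have := hx0min y hyk
        rw [hx1e]; linarith
      · rw [if_pos rfl]
        have := hx1min y hyk
        rw [hx1e]; linarith
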